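/- Let S be a positive recurrent loop shift σ_f with entropy log λ ∈ (0, ∞) and measure of maximal entropy μ. Fix the base vertex and let V be the cylinder set of points whose 0-th edge starts at the base vertex, with f_n first-return loops of length n. Then V is exponentially filling for (S, μ) — i.e., μ(S ∖ ∪_{k=1}^N S^k V) → 0 exponentially fast in N — if and only if σ_f is strongly positive recurrent (limsup f_n^{1/n} < λ). -/

import Mathlib

open Filter ENNReal MeasureTheory

/-- The edge alphabet of the loop graph of `f`: a triple `(n, c, i)` with
`c < f n` selecting one of the `f n` first-return loops of length `n ≥ 1`, and
`i < n` the position along the loop (position `0` starts at the base vertex). -/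
def LoopAlphabet (f : ℕ → ℕ) : Type :=
  {p : ℕ × ℕ × ℕ // p.2.1 < f p.1 ∧ p.2.2 < p.1}

/-- Adjacency in the loop graph. -/
def LoopAdj (f : ℕ → ℕ) (a b : LoopAlphabet f) : Prop :=
  (b.1.1 = a.1.1 ∧ b.1.2.1 = a.1.2.1 ∧ b.1.2.2 = a.1.2.2 + 1) ∨
  (a.1.2.2 + 1 = a.1.1 ∧ b.1.2.2 = 0)

/-- The loop shift space `σ_f`: bi-infinite walks through the loop graph. -/
def LoopShiftSpace (f : ℕ → ℕ) : Type :=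
  {x : ℤ → LoopAlphabet f // ∀ t : ℤ, LoopAdj f (x t) (x (t + 1))}

instance (f : ℕ → ℕ) : MeasurableSpace (LoopShiftSpace f) := ⊤

/-- The shift map on the loop shift space. -/
def loopShift (f : ℕ → ℕ) : LoopShiftSpace f → LoopShiftSpace f :=
  fun x => ⟨fun t => x.1 (t + 1), fun t => x.2 (t + 1)⟩

-- backward step
lemma back_step {f : ℕ → ℕ} (x : LoopShiftSpace f) (t : ℤ) (p : ℕ)
    (h : (x.1 (t + 1)).1.2.2 = p + 1) :
    (x.1 t).1 = ((x.1 (t + 1)).1.1, (x.1 (t + 1)).1.2.1, p) := by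
  rcases x.2 t with ⟨h1, h2, h3⟩ | ⟨h1, h2⟩
  · have hp : (x.1 t).1.2.2 = p := by omega
    ext <;> simp [h1, h2, hp]
  · omega

-- forward step
lemma fwd_step {f : ℕ → ℕ} (x : LoopShiftSpace f) (t : ℤ) (n c' i : ℕ)
    (h : (x.1 t).1 = (n, c', i)) (hi : i + 1 < n) :
    (x.1 (t + 1)).1 = (n, c', i + 1) := by
  rcases x.2 t with ⟨h1, h2, h3⟩ | ⟨h1, h2⟩
  · rw [h] at h1 h2 h3
    ext <;> simp_all
  · rw [h] at h1; simp at h1; omega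

-- the edge determines the whole loop occurrence
lemma loop_det {f : ℕ → ℕ} (x : LoopShiftSpace f) (t : ℤ) (n c' j : ℕ)
    (h : (x.1 t).1 = (n, c', j)) : ∀ i < n, (x.1 (t + i - j)).1 = (n, c', i) := by
  have hj : j < n := by have := (x.1 t).2.2; rw [h] at this; exact this
  have back : ∀ d, d ≤ j → (x.1 (t - d)).1 = (n, c', j - d) := by
    intro d
    induction d with
    | zero => intro _; simpa using h
    | succ d ih =>
      intro hd
      have hprev := ih (by omega)
      have heq : (t - (d + 1 : ℕ)) + 1 = t - d := by push_cast; ring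
      have h2 : (x.1 ((t - (d + 1 : ℕ)) + 1)).1 = (n, c', j - d) := by rw [heq]; exact hprev
      have h3 : (x.1 ((t - (d + 1 : ℕ)) + 1)).1.2.2 = (j - (d + 1)) + 1 := by rw [h2]; simp; omega
      have := back_step x (t - (d + 1 : ℕ)) (j - (d + 1)) h3
      rw [h2] at this
      exact this
  have fwd : ∀ e, j + e < n → (x.1 (t + e)).1 = (n, c', j + e) := by
    intro e
    induction e with
    | zero => intro _; simpa using h
    | succ e ih =>
      intro he
      have hprev := ih (by omega)
      have heq : t + ((e + 1 : ℕ) : ℤ) = (t + e) + 1 := by push_cast; ring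
      rw [heq]
      have := fwd_step x (t + e) n c' (j + e) hprev (by omega)
      rw [this]; simp; omega
  intro i hi
  rcases le_or_gt i j with hij | hij
  · have := back (j - i) (by omega)
    have heq : t + (i : ℤ) - j = t - ((j - i : ℕ) : ℤ) := by push_cast [Nat.cast_sub hij]; ring
    rw [heq, this]; simp; omega
  · have := fwd (i - j) (by omega)
    have heq : t + (i : ℤ) - j = t + ((i - j : ℕ) : ℤ) := by
      push_cast [Nat.cast_sub hij.le]; ring
    rw [heq, this]; simp; omega
lemma iterate_apply {f : ℕ → ℕ} (k : ℕ) (x : LoopShiftSpace f) (t : ℤ) :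
    ((loopShift f)^[k] x).1 t = x.1 (t + k) := by
  induction k generalizing t with
  | zero => simp
  | succ k ih =>
    rw [Function.iterate_succ_apply']
    show ((loopShift f)^[k] x).1 (t + 1) = _
    rw [ih]; congr 1; push_cast; ring

lemma mem_iterate_image {f : ℕ → ℕ} (k : ℕ) (x : LoopShiftSpace f) :
    x ∈ (loopShift f)^[k] '' {y : LoopShiftSpace f | (y.1 0).1.2.2 = 0} ↔
      (x.1 (-(k : ℤ))).1.2.2 = 0 := by
  constructor
  · rintro ⟨y, hy, rfl⟩
    rw [iterate_apply]
    simpa using hy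
  · intro hx
    refine ⟨⟨fun t => x.1 (t - k), fun t => ?_⟩, ?_, ?_⟩
    · have h := x.2 (t - k)
      have heq : t - (k : ℤ) + 1 = t + 1 - k := by ring
      rwa [heq] at h
    · show (x.1 (0 - k)).1.2.2 = 0
      simpa using hx
    · apply Subtype.ext; funext t
      refine (iterate_apply k _ t).trans ?_
      show x.1 (t + k - k) = x.1 t
      congr 1; ring

lemma complement_eq {f : ℕ → ℕ} (N : ℕ) :
    Set.univ \ ⋃ k ∈ Finset.Icc 1 N,
        (loopShift f)^[k] '' {x : LoopShiftSpace f | (x.1 0).1.2.2 = 0} =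
      {x : LoopShiftSpace f | N ≤ (x.1 (-1)).1.2.2} := by
  ext x
  simp only [Set.mem_diff, Set.mem_univ, true_and, Set.mem_iUnion, Finset.mem_Icc,
    Set.mem_setOf_eq, not_exists]
  constructor
  · intro hx
    by_contra hlt
    push_neg at hlt
    obtain ⟨⟨n, c', j⟩, hval⟩ := x.1 (-1)
    set a := x.1 (-1) with ha
    have haval : a.1 = (a.1.1, a.1.2.1, a.1.2.2) := rfl
    have hdet := loop_det x (-1) a.1.1 a.1.2.1 a.1.2.2 haval
    set jj := a.1.2.2 with hjj
    have hjn : jj < a.1.1 := a.2.2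
    have h0 : (x.1 ((-1 : ℤ) + (0:ℕ) - jj)).1 = (a.1.1, a.1.2.1, 0) := hdet 0 (by omega)
    have heq : (-1 : ℤ) + (0:ℕ) - jj = -((jj + 1 : ℕ) : ℤ) := by push_cast; ring
    rw [heq] at h0
    have := hx (jj + 1) ⟨by omega, by omega⟩
    rw [mem_iterate_image] at this
    apply this
    rw [h0]
  · intro hN k hk hmem
    rw [mem_iterate_image] at hmem
    set a := x.1 (-1) with ha
    have haval : a.1 = (a.1.1, a.1.2.1, a.1.2.2) := rfl
    have hdet := loop_det x (-1) a.1.1 a.1.2.1 a.1.2.2 haval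
    set jj := a.1.2.2 with hjj
    have hjn : jj < a.1.1 := a.2.2
    -- k ∈ [1, N], N ≤ jj; position at time -k is jj - (k - 1) ≠ 0
    have hi : jj - (k - 1) < a.1.1 := by omega
    have h0 := hdet (jj - (k - 1)) hi
    have heq : (-1 : ℤ) + ((jj - (k - 1) : ℕ) : ℤ) - jj = -(k : ℤ) := by
      push_cast [Nat.cast_sub (show k - 1 ≤ jj by omega)]
      push_cast [Nat.cast_sub (show 1 ≤ k from hk.1)]
      ring
    rw [heq] at h0
    rw [h0] at hmem
    simp at hmem
    omega

lemma iterate_preimage_measure {f : ℕ → ℕ} (μ : Measure (LoopShiftSpace f))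
    (hinv : ∀ s : Set (LoopShiftSpace f), μ (loopShift f ⁻¹' s) = μ s)
    (k : ℕ) (s : Set (LoopShiftSpace f)) : μ ((loopShift f)^[k] ⁻¹' s) = μ s := by
  induction k with
  | zero => simp
  | succ k ih =>
    rw [Function.iterate_succ, Set.preimage_comp, hinv, ih]

lemma edge_measure {f : ℕ → ℕ} {lam c : ℝ} (μ : Measure (LoopShiftSpace f))
    (hinv : ∀ s : Set (LoopShiftSpace f), μ (loopShift f ⁻¹' s) = μ s)
    (hcyl : ∀ n c' : ℕ, 1 ≤ n → c' < f n →
      μ {x : LoopShiftSpace f | ∀ i : ℕ, i < n → (x.1 (i : ℤ)).1 = (n, c', i)} =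
        ENNReal.ofReal (c * lam⁻¹ ^ n))
    (n c' j : ℕ) (hc' : c' < f n) (hj : j < n) :
    μ {x : LoopShiftSpace f | (x.1 (-1)).1 = (n, c', j)} =
      ENNReal.ofReal (c * lam⁻¹ ^ n) := by
  have key : (loopShift f)^[j+1] ⁻¹' {x : LoopShiftSpace f | (x.1 (-1)).1 = (n, c', j)} =
      {x : LoopShiftSpace f | ∀ i : ℕ, i < n → (x.1 (i : ℤ)).1 = (n, c', i)} := by
    ext x
    simp only [Set.mem_preimage, Set.mem_setOf_eq]
    rw [iterate_apply]
    have heq : (-1 : ℤ) + ((j + 1 : ℕ) : ℤ) = (j : ℤ) := by push_cast; ring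
    rw [heq]
    constructor
    · intro h i hi
      have := loop_det x j n c' j h i hi
      have heq2 : (j : ℤ) + i - j = (i : ℤ) := by ring
      rwa [heq2] at this
    · intro h
      exact h j hj
  rw [← iterate_preimage_measure μ hinv (j+1), key, hcyl n c' (by omega) hc']

lemma all_measurable {f : ℕ → ℕ} (s : Set (LoopShiftSpace f)) : MeasurableSet s :=
  MeasurableSpace.measurableSet_top

lemma lower_bound {f : ℕ → ℕ} {lam c : ℝ} (μ : Measure (LoopShiftSpace f))
    (hinv : ∀ s : Set (LoopShiftSpace f), μ (loopShift f ⁻¹' s) = μ s)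
    (hcyl : ∀ n c' : ℕ, 1 ≤ n → c' < f n →
      μ {x : LoopShiftSpace f | ∀ i : ℕ, i < n → (x.1 (i : ℤ)).1 = (n, c', i)} =
        ENNReal.ofReal (c * lam⁻¹ ^ n))
    (n : ℕ) (hn : 1 ≤ n) :
    (f n : ℝ≥0∞) * ENNReal.ofReal (c * lam⁻¹ ^ n) ≤
      μ {x : LoopShiftSpace f | n - 1 ≤ (x.1 (-1)).1.2.2} := by
  set T : ℕ → Set (LoopShiftSpace f) := fun c' => {x | (x.1 (-1)).1 = (n, c', n - 1)} with hT
  have hdisj : (↑(Finset.range (f n)) : Set ℕ).PairwiseDisjoint T := by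
    intro a _ b _ hab
    refine Set.disjoint_left.2 fun x hxa hxb => hab ?_
    simp only [hT, Set.mem_setOf_eq] at hxa hxb
    rw [hxa] at hxb
    exact ((Prod.ext_iff.1 ((Prod.ext_iff.1 hxb).2)).1 : a = b)
  have hmeas : μ (⋃ c' ∈ Finset.range (f n), T c') =
      ∑ c' ∈ Finset.range (f n), μ (T c') :=
    measure_biUnion_finset hdisj fun _ _ => all_measurable _
  have hval : ∀ c' ∈ Finset.range (f n), μ (T c') = ENNReal.ofReal (c * lam⁻¹ ^ n) := by
    intro c' hc'
    exact edge_measure μ hinv hcyl n c' (n - 1) (Finset.mem_range.1 hc') (by omega)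
  calc (f n : ℝ≥0∞) * ENNReal.ofReal (c * lam⁻¹ ^ n)
      = ∑ c' ∈ Finset.range (f n), μ (T c') := by
        rw [Finset.sum_congr rfl hval]; simp [mul_comm]
    _ = μ (⋃ c' ∈ Finset.range (f n), T c') := hmeas.symm
    _ ≤ μ {x : LoopShiftSpace f | n - 1 ≤ (x.1 (-1)).1.2.2} := by
        apply measure_mono
        intro x hx
        simp only [Set.mem_iUnion, Set.mem_setOf_eq] at hx ⊢
        obtain ⟨c', _, hx⟩ := hx
        rw [hx]

lemma upper_bound {f : ℕ → ℕ} {lam c : ℝ} (μ : Measure (LoopShiftSpace f))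
    (hinv : ∀ s : Set (LoopShiftSpace f), μ (loopShift f ⁻¹' s) = μ s)
    (hcyl : ∀ n c' : ℕ, 1 ≤ n → c' < f n →
      μ {x : LoopShiftSpace f | ∀ i : ℕ, i < n → (x.1 (i : ℤ)).1 = (n, c', i)} =
        ENNReal.ofReal (c * lam⁻¹ ^ n))
    (N : ℕ) :
    μ {x : LoopShiftSpace f | N ≤ (x.1 (-1)).1.2.2} ≤
      ∑' n : ℕ, (f n * (n - N) : ℕ) * ENNReal.ofReal (c * lam⁻¹ ^ n) := by
  set U : ℕ → Set (LoopShiftSpace f) := fun n =>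
    ⋃ p ∈ Finset.range (f n) ×ˢ Finset.Ico N n,
      {x : LoopShiftSpace f | (x.1 (-1)).1 = (n, p.1, p.2)} with hU
  have hcover : {x : LoopShiftSpace f | N ≤ (x.1 (-1)).1.2.2} ⊆ ⋃ n : ℕ, U n := by
    intro x hx
    simp only [Set.mem_setOf_eq] at hx
    refine Set.mem_iUnion.2 ⟨(x.1 (-1)).1.1, ?_⟩
    simp only [hU, Set.mem_iUnion]
    refine ⟨((x.1 (-1)).1.2.1, (x.1 (-1)).1.2.2), ?_, ?_⟩
    · simp only [Finset.mem_product, Finset.mem_range, Finset.mem_Ico]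
      exact ⟨(x.1 (-1)).2.1, hx, (x.1 (-1)).2.2⟩
    · rfl
  calc μ {x : LoopShiftSpace f | N ≤ (x.1 (-1)).1.2.2}
      ≤ ∑' n : ℕ, μ (U n) := (measure_mono hcover).trans (measure_iUnion_le _)
    _ ≤ ∑' n : ℕ, (f n * (n - N) : ℕ) * ENNReal.ofReal (c * lam⁻¹ ^ n) := by
        apply ENNReal.tsum_le_tsum
        intro n
        calc μ (U n) ≤ ∑ p ∈ Finset.range (f n) ×ˢ Finset.Ico N n,
              μ {x : LoopShiftSpace f | (x.1 (-1)).1 = (n, p.1, p.2)} :=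
            measure_biUnion_finset_le _ _
          _ = ∑ p ∈ Finset.range (f n) ×ˢ Finset.Ico N n, ENNReal.ofReal (c * lam⁻¹ ^ n) := by
            apply Finset.sum_congr rfl
            intro p hp
            simp only [Finset.mem_product, Finset.mem_range, Finset.mem_Ico] at hp
            exact edge_measure μ hinv hcyl n p.1 p.2 hp.1 hp.2.2
          _ = (f n * (n - N) : ℕ) * ENNReal.ofReal (c * lam⁻¹ ^ n) := by
            rw [Finset.sum_const]
            simp [mul_comm, Nat.card_Ico]

lemma root_pow_cancel (a : ℝ≥0∞) {N : ℕ} (hN : N ≠ 0) :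
    (a ^ (1 / (N : ℝ))) ^ N = a := by
  rw [← ENNReal.rpow_natCast (a ^ (1 / (N : ℝ))), ← ENNReal.rpow_mul, one_div,
    inv_mul_cancel₀ (by exact_mod_cast hN), ENNReal.rpow_one]

lemma root_le_of_le_pow {a : ℝ≥0∞} {ρ : ℝ} {N : ℕ} (hN : N ≠ 0) (hρ : 0 ≤ ρ)
    (h : a ≤ ENNReal.ofReal (ρ ^ N)) : a ^ (1 / (N : ℝ)) ≤ ENNReal.ofReal ρ := by
  have h1 : a ^ (1 / (N : ℝ)) ≤ (ENNReal.ofReal (ρ ^ N)) ^ (1 / (N : ℝ)) :=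
    ENNReal.rpow_le_rpow h (by positivity)
  rwa [ENNReal.ofReal_pow hρ, ← ENNReal.rpow_natCast, ← ENNReal.rpow_mul,
    mul_one_div, div_self (by exact_mod_cast hN), ENNReal.rpow_one] at h1

lemma le_pow_of_root_lt {a : ℝ≥0∞} {s : ℝ} {N : ℕ} (hN : N ≠ 0) (hs : 0 ≤ s)
    (h : a ^ (1 / (N : ℝ)) < ENNReal.ofReal s) : a ≤ ENNReal.ofReal (s ^ N) := by
  have := pow_le_pow_left' h.le N
  rw [root_pow_cancel a hN] at this
  rwa [ENNReal.ofReal_pow hs]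

lemma pow_le_of_lt_root {k : ℕ} {θ : ℝ} {n : ℕ} (hn : n ≠ 0) (hθ : 0 ≤ θ)
    (h : ENNReal.ofReal θ < (k : ℝ≥0∞) ^ (1 / (n : ℝ))) : θ ^ n ≤ (k : ℝ) := by
  have := pow_le_pow_left' h.le n
  rw [root_pow_cancel _ hn] at this
  have h2 : ENNReal.ofReal (θ ^ n) ≤ ENNReal.ofReal (k : ℝ) := by
    rw [ENNReal.ofReal_pow hθ, ENNReal.ofReal_natCast]
    exact this
  rwa [ENNReal.ofReal_le_ofReal_iff (by positivity)] at h2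

set_option maxHeartbeats 1000000 in
/-- Let `σ_f` be a positive recurrent loop shift with entropy
`log λ ∈ (0, ∞)` (i.e. `λ > 1`, `Σ f_n λ^{−n} = 1`, `Σ n f_n λ^{−n} < ∞`) and
let `μ` be its measure of maximal entropy: the shift-invariant probability
measure giving each cylinder of a first-return loop of length `n` the measure
`c·λ^{−n}` for a constant `c > 0`.  Let `V` be the cylinder of points whose
`0`-th edge starts at the base vertex.  Then `V` is exponentially filling for
`(σ_f, μ)` — i.e. `μ(S ∖ ∪_{k=1}^N S^k V) → 0` exponentially fast in `N` —
if and only if `σ_f` is strongly positive recurrent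
(`limsup f_n^{1/n} < λ`). -/
theorem stmt15 (f : ℕ → ℕ) (lam : ℝ) (c : ℝ) (μ : Measure (LoopShiftSpace f))
    [IsProbabilityMeasure μ]
    (hf0 : f 0 = 0) (hlam : 1 < lam)
    (hrec : HasSum (fun n : ℕ => (f n : ℝ) * lam⁻¹ ^ n) 1)
    (hposrec : Summable fun n : ℕ => (n : ℝ) * (f n : ℝ) * lam⁻¹ ^ n)
    (hc : 0 < c)
    (hinv : ∀ s : Set (LoopShiftSpace f), μ (loopShift f ⁻¹' s) = μ s)
    (hcyl : ∀ n c' : ℕ, 1 ≤ n → c' < f n →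
      μ {x : LoopShiftSpace f | ∀ i : ℕ, i < n → (x.1 (i : ℤ)).1 = (n, c', i)} =
        ENNReal.ofReal (c * lam⁻¹ ^ n)) :
    (Filter.atTop.limsup (fun N : ℕ =>
        (μ (Set.univ \ ⋃ k ∈ Finset.Icc 1 N,
            (loopShift f)^[k] '' {x : LoopShiftSpace f | (x.1 0).1.2.2 = 0}))
          ^ (1 / (N : ℝ))) < 1)
    ↔ Filter.atTop.limsup (fun n : ℕ => ((f n : ℝ≥0∞)) ^ (1 / (n : ℝ)))
        < ENNReal.ofReal lam := by
  have hlam0 : (0 : ℝ) < lam := by linarith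
  simp only [complement_eq]
  set B : ℕ → Set (LoopShiftSpace f) :=
    fun N => {x : LoopShiftSpace f | N ≤ (x.1 (-1)).1.2.2} with hB
  constructor
  · -- exponential filling → SPR
    intro hfill
    by_contra hns
    push_neg at hns
    set L := Filter.atTop.limsup (fun N : ℕ => (μ (B N)) ^ (1 / (N : ℝ))) with hL
    have hLtop : L ≠ ∞ := ne_top_of_lt (hfill.trans ENNReal.one_lt_top)
    have htL : L.toReal < 1 := by
      rw [← ENNReal.ofReal_one] at hfill
      exact (ENNReal.lt_ofReal_iff_toReal_lt hLtop).1 hfill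
    set s : ℝ := (L.toReal + 1) / 2 with hs
    have hs0 : 0 < s := by
      have := ENNReal.toReal_nonneg (a := L); positivity
    have hs1 : s < 1 := by rw [hs]; linarith
    have hLs : L < ENNReal.ofReal s := by
      rw [ENNReal.lt_ofReal_iff_toReal_lt hLtop, hs]; linarith
    obtain ⟨N₁, hN₁⟩ := Filter.eventually_atTop.1 (eventually_lt_of_limsup_lt hLs)
    set ρ : ℝ := (s + 1) / 2 with hρ
    have hsρ : s < ρ := by rw [hρ]; linarith
    have hρ1 : ρ < 1 := by rw [hρ]; linarith
    have hρ0 : 0 < ρ := by linarith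
    set θ' : ℝ := ρ * lam with hθ'
    have hθ'0 : 0 < θ' := by positivity
    have hθ'lam : θ' < lam := by
      rw [hθ']; nlinarith
    have hfreq : ∃ᶠ n in atTop,
        ENNReal.ofReal θ' < ((f n : ℝ≥0∞)) ^ (1 / (n : ℝ)) := by
      apply frequently_lt_of_lt_limsup (by isBoundedDefault)
      exact lt_of_lt_of_le ((ENNReal.ofReal_lt_ofReal_iff hlam0).2 hθ'lam) hns
    have htend : Tendsto (fun n : ℕ => (ρ / s) ^ n) atTop atTop :=
      tendsto_pow_atTop_atTop_of_one_lt ((one_lt_div hs0).2 hsρ)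
    have heve2 : ∀ᶠ n in atTop, 1 / (c * s) < (ρ / s) ^ n :=
      htend.eventually_gt_atTop _
    obtain ⟨n, hfn, hn2, hne⟩ :=
      (hfreq.and_eventually ((eventually_ge_atTop (N₁ + 2)).and heve2)).exists
    -- now derive the contradiction at this n
    have hn1 : 1 ≤ n - 1 := by omega
    have hnn : n ≠ 0 := by omega
    have h1 : θ' ^ n ≤ (f n : ℝ) := pow_le_of_lt_root hnn hθ'0.le hfn
    have h2 : ENNReal.ofReal (c * ρ ^ n) ≤ μ (B (n - 1)) := by
      refine le_trans ?_ (lower_bound μ hinv hcyl n (by omega))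
      rw [← ENNReal.ofReal_natCast, ← ENNReal.ofReal_mul (by positivity)]
      apply ENNReal.ofReal_le_ofReal
      have hρpow : ρ ^ n = θ' ^ n * lam⁻¹ ^ n := by
        rw [← mul_pow, hθ']; field_simp
      rw [hρpow]
      have hpow : (0:ℝ) ≤ lam⁻¹ ^ n := by positivity
      nlinarith [mul_le_mul_of_nonneg_right h1 hpow]
    have h3 : μ (B (n - 1)) ≤ ENNReal.ofReal (s ^ (n - 1)) := by
      apply le_pow_of_root_lt (by omega) hs0.le
      exact hN₁ (n - 1) (by omega)
    have h4 : c * ρ ^ n ≤ s ^ (n - 1) := by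
      rw [← ENNReal.ofReal_le_ofReal_iff (by positivity)]
      exact h2.trans h3
    -- but eventually c * ρ^n > s^(n-1)
    have hsn : s ^ (n - 1) * s = s ^ n := by
      rw [← pow_succ]; congr 1; omega
    rw [div_pow, div_lt_div_iff₀ (by positivity) (by positivity)] at hne
    nlinarith [mul_le_mul_of_nonneg_right h4 hs0.le, hne, hsn]
  · -- SPR → exponential filling
    intro hspr
    set b := Filter.atTop.limsup (fun n : ℕ => ((f n : ℝ≥0∞)) ^ (1 / (n : ℝ))) with hb
    have hbtop : b ≠ ∞ := ne_top_of_lt (hspr.trans_le le_top)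
    have hbR : b.toReal < lam := (ENNReal.lt_ofReal_iff_toReal_lt hbtop).1 hspr
    set θ : ℝ := (b.toReal + lam) / 2 with hθ
    have hbR0 : 0 ≤ b.toReal := ENNReal.toReal_nonneg
    have hθ0 : 0 < θ := by positivity
    have hθlam : θ < lam := by rw [hθ]; linarith
    have hbθ : b < ENNReal.ofReal θ := by
      rw [ENNReal.lt_ofReal_iff_toReal_lt hbtop, hθ]; linarith
    obtain ⟨n₀, hn₀⟩ := Filter.eventually_atTop.1 (eventually_lt_of_limsup_lt hbθ)
    have hfθ : ∀ n, max n₀ 1 ≤ n → (f n : ℝ) ≤ θ ^ n := by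
      intro n hn
      have h := hn₀ n (le_trans (le_max_left _ _) hn)
      have h2 : (f n : ℝ≥0∞) ≤ ENNReal.ofReal (θ ^ n) :=
        le_pow_of_root_lt (by omega) hθ0.le h
      rw [← ENNReal.ofReal_natCast, ENNReal.ofReal_le_ofReal_iff (by positivity)] at h2
      exact h2
    set r : ℝ := θ * lam⁻¹ with hr
    have hr0 : 0 < r := by positivity
    have hr1 : r < 1 := by
      rw [hr, ← div_eq_mul_inv, div_lt_one hlam0]; exact hθlam
    have hsum : Summable (fun m : ℕ => (m : ℝ) * r ^ m) := by
      have := summable_pow_mul_geometric_of_norm_lt_one (R := ℝ) 1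
        (r := r) (by rw [Real.norm_eq_abs, abs_of_pos hr0]; exact hr1)
      simpa using this
    set D : ℝ := c * ∑' m : ℕ, (m : ℝ) * r ^ m with hD
    have hD0 : 0 ≤ D := by
      rw [hD]
      apply mul_nonneg hc.le
      exact tsum_nonneg (fun m => by positivity)
    -- key upper bound
    have hkey : ∀ N, max n₀ 1 ≤ N → μ (B N) ≤ ENNReal.ofReal (D * r ^ N) := by
      intro N hN
      set g : ℕ → ℝ := fun n => c * ((n - N : ℕ) : ℝ) * r ^ n with hg
      have hg0 : ∀ n, 0 ≤ g n := fun n => by rw [hg]; positivity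
      have hgsum : Summable g := by
        apply Summable.of_nonneg_of_le hg0 (f := fun n : ℕ => c * ((n : ℝ) * r ^ n))
        · intro n
          simp only [hg]
          have h1 : ((n - N : ℕ) : ℝ) ≤ (n : ℝ) := by
            exact_mod_cast Nat.cast_le.2 (Nat.sub_le n N)
          have hrn : (0:ℝ) ≤ r ^ n := by positivity
          nlinarith [mul_le_mul_of_nonneg_right
            (mul_le_mul_of_nonneg_left h1 hc.le) hrn]
        · exact hsum.mul_left c
      have hterm : ∀ n : ℕ,
          ((f n * (n - N) : ℕ) : ℝ≥0∞) * ENNReal.ofReal (c * lam⁻¹ ^ n) ≤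
            ENNReal.ofReal (g n) := by
        intro n
        rcases le_or_gt n N with hle | hgt
        · have : n - N = 0 := by omega
          simp [this]
        · have hfn : (f n : ℝ) ≤ θ ^ n := hfθ n (by omega)
          rw [← ENNReal.ofReal_natCast, ← ENNReal.ofReal_mul (by positivity)]
          apply ENNReal.ofReal_le_ofReal
          simp only [hg]
          have hrn : r ^ n = θ ^ n * lam⁻¹ ^ n := by rw [hr, mul_pow]
          rw [hrn]
          push_cast
          have hpow : (0:ℝ) ≤ lam⁻¹ ^ n := by positivity
          have hnN : (0:ℝ) ≤ c * ((n - N : ℕ) : ℝ) := by positivity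
          nlinarith [mul_le_mul_of_nonneg_left
            (mul_le_mul_of_nonneg_right hfn hpow) hnN]
      have hshift : ∑' n : ℕ, g n = D * r ^ N := by
        have hinj : Function.Injective (fun m : ℕ => m + N) := add_left_injective N
        have hsupp : Function.support g ⊆ Set.range (fun m : ℕ => m + N) := by
          intro n hn
          rw [Function.mem_support] at hn
          simp only [hg] at hn
          have : N < n := by
            by_contra hcon
            push_neg at hcon
            have : n - N = 0 := by omega
            simp [this] at hn
          exact ⟨n - N, by simp only []; omega⟩
        rw [← hinj.tsum_eq hsupp]
        have : ∀ m : ℕ, g (m + N) = (c * r ^ N) * ((m : ℝ) * r ^ m) := by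
          intro m
          simp only [hg]
          have hmN : m + N - N = m := by omega
          rw [hmN, pow_add]
          ring
        rw [tsum_congr this, tsum_mul_left, hD]
        ring
      calc μ (B N) ≤ ∑' n : ℕ, ((f n * (n - N) : ℕ) : ℝ≥0∞) *
            ENNReal.ofReal (c * lam⁻¹ ^ n) := upper_bound μ hinv hcyl N
        _ ≤ ∑' n : ℕ, ENNReal.ofReal (g n) := ENNReal.tsum_le_tsum hterm
        _ = ENNReal.ofReal (∑' n : ℕ, g n) :=
            (ENNReal.ofReal_tsum_of_nonneg hg0 hgsum).symm
        _ = ENNReal.ofReal (D * r ^ N) := by rw [hshift]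
    -- conclude
    set ρ' : ℝ := (r + 1) / 2 with hρ'
    have hrρ' : r < ρ' := by rw [hρ']; linarith
    have hρ'1 : ρ' < 1 := by rw [hρ']; linarith
    have hρ'0 : 0 < ρ' := by linarith
    have htend : Tendsto (fun N : ℕ => D * (r / ρ') ^ N) atTop (nhds 0) := by
      have h1 : Tendsto (fun N : ℕ => (r / ρ') ^ N) atTop (nhds 0) :=
        tendsto_pow_atTop_nhds_zero_of_lt_one (by positivity)
          ((div_lt_one hρ'0).2 hrρ')
      simpa using h1.const_mul D
    have heve3 : ∀ᶠ N in atTop, D * (r / ρ') ^ N < 1 :=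
      htend.eventually_lt_const one_pos
    have heve4 : ∀ᶠ N : ℕ in atTop,
        (μ (B N)) ^ (1 / (N : ℝ)) ≤ ENNReal.ofReal ρ' := by
      filter_upwards [eventually_ge_atTop (max n₀ 1), heve3,
        eventually_ge_atTop 1] with N hN h3 hN1
      apply root_le_of_le_pow (by omega) hρ'0.le
      refine (hkey N hN).trans (ENNReal.ofReal_le_ofReal ?_)
      have hid : r ^ N = (r / ρ') ^ N * ρ' ^ N := by
        rw [div_pow]; field_simp
      have hρ'N : (0:ℝ) < ρ' ^ N := by positivity
      rw [hid]
      nlinarith [h3, hρ'N]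
    calc Filter.atTop.limsup (fun N : ℕ => (μ (B N)) ^ (1 / (N : ℝ)))
        ≤ ENNReal.ofReal ρ' := limsup_le_of_le (by isBoundedDefault) heve4
      _ < 1 := ENNReal.ofReal_lt_one.2 hρ'1
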